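/- arXiv:1403.0445 — 5 statements merged into one kernel-verified Lean document; each statement's English description precedes it below -/
import Mathlib

section
/- For any nonempty finite set of prefixes all containing a common address a, the set is totally ordered by specificity; in particular it has a unique most specific element. -/
/-- Addresses are bitvectors of fixed length `n`. -/
abbrev Addr (n : ℕ) := Fin n → Bool

/-- The set of addresses denoted by the prefix `p/plen`. -/
def pset (n : ℕ) (P : Addr n × ℕ) : Set (Addr n) :=
  {a | ∀ i : Fin n, (i : ℕ) < P.2 → a i = P.1 i}

/-- Any nonempty finite set of prefixes all containing a common address `a`
    is totally ordered by specificity; in particular it has a most specific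
    element, unique up to equality of denoted address sets. -/
theorem stmt2 (n : ℕ) (S : Finset (Addr n × ℕ)) (hS : S.Nonempty)
    (hlen : ∀ P ∈ S, P.2 ≤ n)
    (a : Addr n) (ha : ∀ P ∈ S, a ∈ pset n P) :
    (∀ P ∈ S, ∀ Q ∈ S, pset n P ⊆ pset n Q ∨ pset n Q ⊆ pset n P) ∧
    ∃ P ∈ S, (∀ Q ∈ S, pset n P ⊆ pset n Q) ∧
      ∀ P' ∈ S, (∀ Q ∈ S, pset n P' ⊆ pset n Q) → pset n P' = pset n P := by

  have key : ∀ P ∈ S, ∀ Q ∈ S, Q.2 ≤ P.2 → pset n P ⊆ pset n Q := by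
    intro P hP Q hQ hle x hx i hi
    have h1 := hx i (lt_of_lt_of_le hi hle)
    have h2 := ha P hP i (lt_of_lt_of_le hi hle)
    have h3 := ha Q hQ i hi
    rw [h1, ← h2, h3]
  constructor
  · intro P hP Q hQ
    rcases le_total Q.2 P.2 with h | h
    · exact Or.inl (key P hP Q hQ h)
    · exact Or.inr (key Q hQ P hP h)
  · obtain ⟨P, hP, hmax⟩ := S.exists_max_image Prod.snd hS
    refine ⟨P, hP, fun Q hQ => key P hP Q hQ (hmax Q hQ), ?_⟩
    intro P' hP' h'
    exact Set.Subset.antisymm (h' P hP) (key P hP P' hP' (hmax P' hP'))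
end

section
/- If two destination–source prefix pairs (d₁,s₁) and (d₂,s₂) are in conflict with d₁ < d₂ and s₂ < s₁, then their conflict zone (the set of address pairs matched by both) is exactly the set of pairs matched by (d₁, s₂). -/
/-- If `(d₁,s₁)` and `(d₂,s₂)` are in conflict with `d₁ < d₂` and `s₂ < s₁`,
    then their conflict zone — the set of address pairs matched by both —
    is exactly the set of pairs matched by `(d₁, s₂)`. -/
theorem stmt6 {α : Type*} (d₁ s₁ d₂ s₂ : Set α)
    (hd : d₁ ⊂ d₂) (hs : s₂ ⊂ s₁) :
    (d₁ ×ˢ s₁) ∩ (d₂ ×ˢ s₂) = d₁ ×ˢ s₂ := by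
  ext ⟨a,b⟩
  simp only [Set.mem_inter_iff, Set.mem_prod]
  exact ⟨fun h => ⟨h.1.1, h.2.2⟩, fun h => ⟨⟨h.1, hs.1 h.2⟩, ⟨hd.1 h.1, h.2⟩⟩⟩
end

section
/- The destination-first ordering ⪯ restricted to the set of destination–source pairs matching a fixed address pair (a_d, a_s) is a total order. -/
/-- Destination and source address sets of an entry. -/
def dset (n : ℕ) (e : (Addr n × ℕ) × (Addr n × ℕ)) : Set (Addr n) := pset n e.1
def sset (n : ℕ) (e : (Addr n × ℕ) × (Addr n × ℕ)) : Set (Addr n) := pset n e.2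

/-- Destination-first ordering. -/
def DF (n : ℕ) (e e' : (Addr n × ℕ) × (Addr n × ℕ)) : Prop :=
  dset n e ⊂ dset n e' ∨ (dset n e = dset n e' ∧ sset n e ⊆ sset n e')

lemma pset_sub {n : ℕ} {a : Addr n} {P P' : Addr n × ℕ}
    (ha : a ∈ pset n P) (ha' : a ∈ pset n P') (hle : P.2 ≤ P'.2) :
    pset n P' ⊆ pset n P := by
  intro b hb i hi
  rw [hb i (lt_of_lt_of_le hi hle), ← ha' i (lt_of_lt_of_le hi hle), ha i hi]

lemma pset_total {n : ℕ} {a : Addr n} {P P' : Addr n × ℕ}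
    (ha : a ∈ pset n P) (ha' : a ∈ pset n P') :
    pset n P ⊆ pset n P' ∨ pset n P' ⊆ pset n P := by
  rcases le_total P.2 P'.2 with h | h
  · exact Or.inr (pset_sub ha ha' h)
  · exact Or.inl (pset_sub ha' ha h)

/-- The destination-first ordering is total on the destination–source pairs
    matching a fixed address pair `(a_d, a_s)`. -/
theorem stmt8 (n : ℕ) (a : Addr n × Addr n)
    (e e' : (Addr n × ℕ) × (Addr n × ℕ))
    (h : a.1 ∈ dset n e ∧ a.2 ∈ sset n e)
    (h' : a.1 ∈ dset n e' ∧ a.2 ∈ sset n e') :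
    DF n e e' ∨ DF n e' e := by
  rcases pset_total h.1 h'.1 with hd | hd
  · rcases hd.lt_or_eq with hlt | heq
    · exact Or.inl (Or.inl hlt)
    · rcases pset_total h.2 h'.2 with hs | hs
      · exact Or.inl (Or.inr ⟨heq, hs⟩)
      · exact Or.inr (Or.inr ⟨heq.symm, hs⟩)
  · rcases hd.lt_or_eq with hlt | heq
    · exact Or.inr (Or.inl hlt)
    · rcases pset_total h.2 h'.2 with hs | hs
      · exact Or.inl (Or.inr ⟨heq.symm, hs⟩)
      · exact Or.inr (Or.inr ⟨heq, hs⟩)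
end

section
/- A source-specific routing table T is non-ambiguous if and only if it is weakly complete, i.e., for all r₁, r₂ ∈ T, the conflict zone r₁ ∩ r₂ equals the union of the entries of T that are more specific than r₁ ∩ r₂. -/
/-- A routing table (finite set of entries identified with the sets of
    address pairs they match) is non-ambiguous: every address pair matched by
    at least one entry has a minimum matching entry under inclusion. -/
def NonAmbiguous {α : Type*} (T : Finset (Set α)) : Prop :=
  ∀ a : α, (∃ r ∈ T, a ∈ r) →
    ∃ r ∈ T, a ∈ r ∧ ∀ r' ∈ T, a ∈ r' → r ⊆ r'

/-- Weak completeness: every conflict zone `r₁ ∩ r₂` is exactly the union of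
    the entries of `T` more specific than it. -/
def WeaklyComplete {α : Type*} (T : Finset (Set α)) : Prop :=
  ∀ r₁ ∈ T, ∀ r₂ ∈ T, r₁ ∩ r₂ = ⋃₀ {r | r ∈ T ∧ r ⊆ r₁ ∩ r₂}

/-- A routing table is non-ambiguous iff it is weakly complete. -/
theorem stmt9 {α : Type*} (T : Finset (Set α)) :
    NonAmbiguous T ↔ WeaklyComplete T := by
  constructor
  · intro hNA r₁ h₁ r₂ h₂
    apply Set.Subset.antisymm
    · intro a ha
      obtain ⟨r, hr, har, hmin⟩ := hNA a ⟨r₁, h₁, ha.1⟩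
      exact ⟨r, ⟨hr, Set.subset_inter (hmin r₁ h₁ ha.1) (hmin r₂ h₂ ha.2)⟩, har⟩
    · intro a ⟨r, ⟨_, hsub⟩, har⟩
      exact hsub har
  · intro hWC a ⟨r₀, hr₀, har₀⟩
    classical
    set S := T.filter (fun r => a ∈ r) with hS
    have hne : S.Nonempty := ⟨r₀, Finset.mem_filter.mpr ⟨hr₀, har₀⟩⟩
    obtain ⟨r, hrS, hmin⟩ : ∃ r ∈ S, ∀ x ∈ S, ¬ x < r := by
      obtain ⟨r, hr⟩ := Finset.exists_minimal hne
      exact ⟨r, hr.1, fun x hx => hr.not_lt hx⟩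
    have hrT : r ∈ T := (Finset.mem_filter.mp hrS).1
    have har : a ∈ r := (Finset.mem_filter.mp hrS).2
    refine ⟨r, hrT, har, fun r' hr' har' => ?_⟩
    have := hWC r hrT r' hr'
    have hain : a ∈ r ∩ r' := ⟨har, har'⟩
    rw [this] at hain
    obtain ⟨s, ⟨hsT, hsub⟩, has⟩ := hain
    have hsS : s ∈ S := Finset.mem_filter.mpr ⟨hsT, has⟩
    have hsr : s ⊆ r := hsub.trans Set.inter_subset_left
    have : ¬ s < r := hmin s hsS
    have : s = r := le_antisymm hsr (by
      by_contra h
      exact this (lt_of_le_of_ne hsr (fun he => h (he ▸ le_refl _))))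
    exact this ▸ hsub.trans Set.inter_subset_right
end

section
/- Let r₁ = (d₁,s₁) and r₂ = (d₂,s₂) be entries in conflict with d₁ < d₂ and s₂ < s₁, and let r_sol = (d₁, s₂) be the disambiguation entry. Then any entry r₃ = (d₃,s₃) in conflict with r_sol is already in conflict with r₁ or with r₂. -/
/-- Two destination–source pairs conflict iff one has a strictly more specific
    destination and a strictly less specific source than the other. -/
def Conflict {α : Type*} (d s d' s' : Set α) : Prop :=
  (d ⊂ d' ∧ s' ⊂ s) ∨ (d' ⊂ d ∧ s ⊂ s')

/-- If `r₁ = (d₁,s₁)` and `r₂ = (d₂,s₂)` conflict with `d₁ < d₂` and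
    `s₂ < s₁`, then any entry `r₃ = (d₃,s₃)` in conflict with the
    disambiguation entry `r_sol = (d₁,s₂)` is already in conflict with
    `r₁` or with `r₂`. -/
theorem stmt11 {α : Type*} (d₁ s₁ d₂ s₂ d₃ s₃ : Set α)
    (hd : d₁ ⊂ d₂) (hs : s₂ ⊂ s₁)
    (h : Conflict d₁ s₂ d₃ s₃) :
    Conflict d₁ s₁ d₃ s₃ ∨ Conflict d₂ s₂ d₃ s₃ := by
  rcases h with ⟨h1, h2⟩ | ⟨h1, h2⟩
  · exact Or.inl (Or.inl ⟨h1, h2.trans hs⟩)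
  · exact Or.inr (Or.inr ⟨h1.trans hd, h2⟩)
end
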